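/- The polynomial F_{S1} := x0^9 + (x1^3 − x2^3)·(x2^3 − x3^3)·(x3^3 − x1^3) is irreducible in the polynomial ring ℂ[x0, x1, x2, x3]. -/

import Mathlib

open MvPolynomial

/-- The homogeneous degree-9 polynomial defining the surface `S1 ⊂ ℙ³_ℂ`. -/
noncomputable def FS1 : MvPolynomial (Fin 4) ℂ :=
  X 0 ^ 9 + (X 1 ^ 3 - X 2 ^ 3) * (X 2 ^ 3 - X 3 ^ 3) * (X 3 ^ 3 - X 1 ^ 3)

noncomputable def gS1 : MvPolynomial (Fin 3) ℂ :=
  (X 0 ^ 3 - X 1 ^ 3) * (X 1 ^ 3 - X 2 ^ 3) * (X 2 ^ 3 - X 0 ^ 3)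

noncomputable def piS1 : MvPolynomial (Fin 3) ℂ := X 0 - X 1

noncomputable def uS1 : MvPolynomial (Fin 3) ℂ :=
  (X 0 ^ 2 + X 0 * X 1 + X 1 ^ 2) * (X 1 ^ 3 - X 2 ^ 3) * (X 2 ^ 3 - X 0 ^ 3)

lemma gS1_eq : gS1 = piS1 * uS1 := by
  unfold gS1 piS1 uS1; ring

lemma prime_piS1 : Prime piS1 := by
  have hx1 : (finSuccEquiv ℂ 2) (X 1) = Polynomial.C (X 0) :=
    finSuccEquiv_X_succ (j := 0)
  have h : (finSuccEquiv ℂ 2) piS1 = Polynomial.X - Polynomial.C (X 0) := by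
    simp only [piS1, map_sub, finSuccEquiv_X_zero, hx1]
  refine (MulEquiv.prime_iff (finSuccEquiv ℂ 2).toMulEquiv).mp ?_
  show Prime ((finSuccEquiv ℂ 2) piS1)
  rw [h]
  exact Polynomial.prime_X_sub_C _

lemma not_dvd_uS1 : ¬ piS1 ∣ uS1 := by
  intro ⟨t, ht⟩
  have := congrArg (eval ![1, 1, 0]) ht
  simp [uS1, piS1] at this
  norm_num at this

lemma irreducible_aux : Irreducible (Polynomial.X ^ 9 + Polynomial.C gS1) := by
  set f : Polynomial (MvPolynomial (Fin 3) ℂ) := Polynomial.X ^ 9 + Polynomial.C gS1 with hf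
  have hmonic : f.Monic := Polynomial.monic_X_pow_add_C _ (by norm_num)
  have hdeg : f.natDegree = 9 := Polynomial.natDegree_X_pow_add_C
  have hP : (Ideal.span {piS1}).IsPrime :=
    (Ideal.span_singleton_prime prime_piS1.ne_zero).mpr prime_piS1
  have hcoeff0 : f.coeff 0 = gS1 := by
    simp [hf, Polynomial.coeff_X_pow]
  have hEis : f.IsEisensteinAt (Ideal.span {piS1}) := by
    constructor
    · rw [hmonic.leadingCoeff]
      intro h1
      exact prime_piS1.not_unit (Ideal.span_singleton_eq_top.mp ((Ideal.eq_top_iff_one _).mpr h1))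
    · intro n hn
      rw [hdeg] at hn
      rcases Nat.eq_zero_or_pos n with hn0 | hn0
      · subst hn0
        rw [hcoeff0]
        exact Ideal.mem_span_singleton.mpr ⟨uS1, gS1_eq⟩
      · have : f.coeff n = 0 := by
          simp only [hf, Polynomial.coeff_add, Polynomial.coeff_X_pow, Polynomial.coeff_C]
          rw [if_neg (by omega), if_neg (by omega), add_zero]
        rw [this]; exact Ideal.zero_mem _
    · rw [hcoeff0, Ideal.span_singleton_pow, Ideal.mem_span_singleton]
      intro ⟨t, ht⟩
      rw [gS1_eq, pow_two, mul_assoc] at ht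
      have hu : uS1 = piS1 * t := mul_left_cancel₀ prime_piS1.ne_zero ht
      exact not_dvd_uS1 ⟨t, hu⟩
  exact hEis.irreducible hP hmonic.isPrimitive (by rw [hdeg]; norm_num)

set_option maxRecDepth 10000 in
set_option maxHeartbeats 1000000 in
/-- `F_{S1}` is irreducible in `ℂ[x0, x1, x2, x3]`. -/
theorem stmt_0 : Irreducible FS1 := by
  have him : (finSuccEquiv ℂ 3) FS1 = Polynomial.X ^ 9 + Polynomial.C gS1 := by
    have hx1 : (finSuccEquiv ℂ 3) (X 1) = Polynomial.C (X 0) := finSuccEquiv_X_succ (j := 0)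
    have hx2 : (finSuccEquiv ℂ 3) (X 2) = Polynomial.C (X 1) := finSuccEquiv_X_succ (j := 1)
    have hx3 : (finSuccEquiv ℂ 3) (X 3) = Polynomial.C (X 2) := finSuccEquiv_X_succ (j := 2)
    rw [FS1, gS1, map_add, map_pow, finSuccEquiv_X_zero, map_mul, map_mul, map_sub, map_sub,
      map_sub, map_pow, map_pow, map_pow]
    simp only [hx1, hx2, hx3, ← Polynomial.C_pow, ← Polynomial.C_sub, ← Polynomial.C_mul]
  exact (MulEquiv.irreducible_iff (finSuccEquiv ℂ 3).toMulEquiv).mp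
    (by show Irreducible ((finSuccEquiv ℂ 3) FS1); rw [him]; exact irreducible_aux)
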